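/- Let θ₀, θ₁, θ₂ > 0 and b₁, b₂ > 0, and consider the two-factor exponential model on X = [0, b₁]×[0, b₂] with gradient regression functions f(x₁, x₂) = e^{θ₁x₁+θ₂x₂}·(1, θ₀x₁, θ₀x₂)ᵀ ∈ ℝ³. Every admissible design on X for this model is supported on the boundary of the rectangle [0, b₁]×[0, b₂]. -/

import Mathlib

open Matrix Set

noncomputable section

/-- A (finitely supported) approximate design on a design space `X`. -/
def IsDesign {α : Type*} (X : Set α) (ξ : α → ℝ) : Prop :=
  (Function.support ξ).Finite ∧ (∀ x, 0 ≤ ξ x) ∧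
    Function.support ξ ⊆ X ∧ ∑ᶠ x, ξ x = 1

/-- The information matrix of a design `ξ` for regression functions `f`. -/
def infoMatrix {α ι : Type*} [Fintype ι] (f : α → ι → ℝ) (ξ : α → ℝ) :
    Matrix ι ι ℝ :=
  ∑ᶠ x, ξ x • Matrix.vecMulVec (f x) (f x)

/-- An information function: positively homogeneous, superadditive, nonnegative,
non-constant and upper semicontinuous on the nonnegative definite matrices. -/
def IsInfoFun {ι : Type*} [Fintype ι] (φ : Matrix ι ι ℝ → ℝ) : Prop :=
  (∀ M : Matrix ι ι ℝ, M.PosSemidef → 0 ≤ φ M) ∧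
  (∀ c : ℝ, 0 < c → ∀ M : Matrix ι ι ℝ, M.PosSemidef → φ (c • M) = c * φ M) ∧
  (∀ M N : Matrix ι ι ℝ, M.PosSemidef → N.PosSemidef → φ M + φ N ≤ φ (M + N)) ∧
  (∃ M N : Matrix ι ι ℝ, M.PosSemidef ∧ N.PosSemidef ∧ φ M ≠ φ N) ∧
  UpperSemicontinuousOn φ {M : Matrix ι ι ℝ | M.PosSemidef}

/-- A `φ`-optimal design. -/
def IsOptimalDesign {α ι : Type*} [Fintype ι] (X : Set α) (f : α → ι → ℝ)
    (φ : Matrix ι ι ℝ → ℝ) (ξ : α → ℝ) : Prop :=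
  IsDesign X ξ ∧ ∀ η, IsDesign X η → φ (infoMatrix f η) ≤ φ (infoMatrix f ξ)

/-- Admissibility of a design in the Loewner ordering. -/
def IsAdmissible {α ι : Type*} [Fintype ι] (X : Set α) (f : α → ι → ℝ) (ξ : α → ℝ) : Prop :=
  IsDesign X ξ ∧
    ¬ ∃ η, IsDesign X η ∧ (infoMatrix f η - infoMatrix f ξ).PosSemidef ∧
      infoMatrix f η ≠ infoMatrix f ξ

/-- The smallest eigenvalue of a matrix. -/
def lamMin {ι : Type*} [Fintype ι] (M : Matrix ι ι ℝ) : ℝ :=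
  sInf {r : ℝ | ∃ v : ι → ℝ, v ≠ 0 ∧ M *ᵥ v = r • v}

lemma sum_shift {M : Type*} [AddCommGroup M] [Module ℝ M]
    (ξ : ℝ × ℝ → ℝ) (hfin : (Function.support ξ).Finite)
    (x₀ p q : ℝ × ℝ) (hp : p ≠ x₀) (hq : q ≠ x₀) (hpq : p ≠ q) (g : ℝ × ℝ → M) :
    ∑ᶠ y, ((if y = x₀ then 0 else ξ y) + (if y = p then ξ x₀ / 2 else 0)
        + (if y = q then ξ x₀ / 2 else 0)) • g y
      = ∑ᶠ y, ξ y • g y + (ξ x₀ / 2) • g p + (ξ x₀ / 2) • g q - ξ x₀ • g x₀ := by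
  classical
  set S : Finset (ℝ × ℝ) := hfin.toFinset ∪ {x₀, p, q} with hS
  have hx₀S : x₀ ∈ S := by simp [hS]
  have hpS : p ∈ S := by simp [hS]
  have hqS : q ∈ S := by simp [hS]
  have hsub : ∀ y : ℝ × ℝ, ξ y ≠ 0 → y ∈ S := fun y hy => by
    simp [hS, Set.Finite.mem_toFinset, Function.mem_support, hy]
  have h1 : ∑ᶠ y, ξ y • g y = ∑ y ∈ S, ξ y • g y := by
    apply finsum_eq_sum_of_support_subset
    intro y hy
    apply hsub
    intro h0
    simp [Function.mem_support, h0] at hy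
  have h2 : ∑ᶠ y, ((if y = x₀ then 0 else ξ y) + (if y = p then ξ x₀ / 2 else 0)
        + (if y = q then ξ x₀ / 2 else 0)) • g y
      = ∑ y ∈ S, ((if y = x₀ then 0 else ξ y) + (if y = p then ξ x₀ / 2 else 0)
        + (if y = q then ξ x₀ / 2 else 0)) • g y := by
    apply finsum_eq_sum_of_support_subset
    intro y hy
    simp only [Function.mem_support] at hy
    by_cases hyx : y = x₀
    · exact hyx ▸ hx₀S
    by_cases hyp : y = p
    · exact hyp ▸ hpS
    by_cases hyq : y = q
    · exact hyq ▸ hqS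
    apply hsub
    intro h0
    simp [hyx, hyp, hyq, h0] at hy
  rw [h1, h2]
  have expand : ∀ y ∈ S, ((if y = x₀ then 0 else ξ y) + (if y = p then ξ x₀ / 2 else 0)
        + (if y = q then ξ x₀ / 2 else 0)) • g y
      = (ξ y • g y - (if y = x₀ then ξ x₀ • g x₀ else 0))
        + (if y = p then (ξ x₀ / 2) • g p else 0) + (if y = q then (ξ x₀ / 2) • g q else 0) := by
    intro y _
    by_cases hyx : y = x₀
    · subst hyx
      simp [hp.symm, hq.symm]
    · by_cases hyp : y = p
      · subst hyp
        simp [hyx, hpq, add_smul]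
      · by_cases hyq : y = q
        · subst hyq
          simp [hyx, hpq.symm, add_smul]
        · simp [hyx, hyp, hyq]
  rw [Finset.sum_congr rfl expand]
  rw [Finset.sum_add_distrib, Finset.sum_add_distrib, Finset.sum_sub_distrib]
  rw [Finset.sum_ite_eq' S x₀ (fun _ => ξ x₀ • g x₀), Finset.sum_ite_eq' S p,
    Finset.sum_ite_eq' S q]
  simp [hx₀S, hpS, hqS]
  abel

/-- for the two-factor exponential model with gradient
`f(x₁,x₂) = e^{θ₁x₁+θ₂x₂}(1, θ₀x₁, θ₀x₂)ᵀ` on `[0,b₁]×[0,b₂]`, every admissible design is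
supported on the boundary of the rectangle. -/
theorem two_factor_exponential_admissible_boundary
    (θ₀ θ₁ θ₂ b₁ b₂ : ℝ) (hθ₀ : 0 < θ₀) (hθ₁ : 0 < θ₁) (hθ₂ : 0 < θ₂)
    (hb₁ : 0 < b₁) (hb₂ : 0 < b₂)
    (f : ℝ × ℝ → Fin 3 → ℝ)
    (hf : ∀ x : ℝ × ℝ,
      f x = Real.exp (θ₁ * x.1 + θ₂ * x.2) • ![1, θ₀ * x.1, θ₀ * x.2])
    (ξ : ℝ × ℝ → ℝ)
    (hadm : IsAdmissible (Set.Icc (0 : ℝ) b₁ ×ˢ Set.Icc (0 : ℝ) b₂) f ξ) :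
    Function.support ξ ⊆
      {x : ℝ × ℝ | x ∈ Set.Icc (0 : ℝ) b₁ ×ˢ Set.Icc (0 : ℝ) b₂ ∧
        (x.1 = 0 ∨ x.1 = b₁ ∨ x.2 = 0 ∨ x.2 = b₂)} := by
  classical
  obtain ⟨⟨hfin, hpos, hsupp, hsum⟩, hnot⟩ := hadm
  intro x₀ hx₀
  have hx0ne : ξ x₀ ≠ 0 := hx₀
  have hxX : x₀ ∈ Set.Icc (0 : ℝ) b₁ ×ˢ Set.Icc (0 : ℝ) b₂ := hsupp hx₀
  refine ⟨hxX, ?_⟩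
  by_contra hbd
  push_neg at hbd
  obtain ⟨h10, h1b, h20, h2b⟩ := hbd
  rw [Set.mem_prod, Set.mem_Icc, Set.mem_Icc] at hxX
  obtain ⟨⟨ha0, hab⟩, hc0, hcb⟩ := hxX
  have ha0' : 0 < x₀.1 := lt_of_le_of_ne ha0 (Ne.symm h10)
  have hab' : x₀.1 < b₁ := lt_of_le_of_ne hab h1b
  have hc0' : 0 < x₀.2 := lt_of_le_of_ne hc0 (Ne.symm h20)
  have hcb' : x₀.2 < b₂ := lt_of_le_of_ne hcb h2b
  have hw : 0 < ξ x₀ := lt_of_le_of_ne (hpos x₀) (Ne.symm hx0ne)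
  set t : ℝ := min (min x₀.1 (b₁ - x₀.1) / θ₂) (min x₀.2 (b₂ - x₀.2) / θ₁) with htdef
  have ht : 0 < t :=
    lt_min (div_pos (lt_min ha0' (by linarith)) hθ₂)
      (div_pos (lt_min hc0' (by linarith)) hθ₁)
  have ht2 : t * θ₂ ≤ min x₀.1 (b₁ - x₀.1) :=
    (le_div_iff₀ hθ₂).1 (min_le_left _ _)
  have ht1 : t * θ₁ ≤ min x₀.2 (b₂ - x₀.2) :=
    (le_div_iff₀ hθ₁).1 (min_le_right _ _)
  have ht2a : t * θ₂ ≤ x₀.1 := le_trans ht2 (min_le_left _ _)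
  have ht2b : t * θ₂ ≤ b₁ - x₀.1 := le_trans ht2 (min_le_right _ _)
  have ht1a : t * θ₁ ≤ x₀.2 := le_trans ht1 (min_le_left _ _)
  have ht1b : t * θ₁ ≤ b₂ - x₀.2 := le_trans ht1 (min_le_right _ _)
  have htθ₂ : 0 < t * θ₂ := mul_pos ht hθ₂
  have htθ₁ : 0 < t * θ₁ := mul_pos ht hθ₁
  set p : ℝ × ℝ := (x₀.1 + t * θ₂, x₀.2 - t * θ₁) with hpdef
  set q : ℝ × ℝ := (x₀.1 - t * θ₂, x₀.2 + t * θ₁) with hqdef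
  have hp1 : p.1 = x₀.1 + t * θ₂ := rfl
  have hp2 : p.2 = x₀.2 - t * θ₁ := rfl
  have hq1 : q.1 = x₀.1 - t * θ₂ := rfl
  have hq2 : q.2 = x₀.2 + t * θ₁ := rfl
  have hpne : p ≠ x₀ := by
    intro h
    have := congrArg Prod.fst h
    rw [hp1] at this
    linarith
  have hqne : q ≠ x₀ := by
    intro h
    have := congrArg Prod.fst h
    rw [hq1] at this
    linarith
  have hpq : p ≠ q := by
    intro h
    have := congrArg Prod.fst h
    rw [hp1, hq1] at this
    linarith
  have hpX : p ∈ Set.Icc (0 : ℝ) b₁ ×ˢ Set.Icc (0 : ℝ) b₂ := by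
    rw [Set.mem_prod, Set.mem_Icc, Set.mem_Icc, hp1, hp2]
    refine ⟨⟨by linarith, by linarith⟩, by linarith, by linarith⟩
  have hqX : q ∈ Set.Icc (0 : ℝ) b₁ ×ˢ Set.Icc (0 : ℝ) b₂ := by
    rw [Set.mem_prod, Set.mem_Icc, Set.mem_Icc, hq1, hq2]
    refine ⟨⟨by linarith, by linarith⟩, by linarith, by linarith⟩
  -- the improved design
  set η : ℝ × ℝ → ℝ := fun y => (if y = x₀ then 0 else ξ y)
      + (if y = p then ξ x₀ / 2 else 0) + (if y = q then ξ x₀ / 2 else 0) with hηdef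
  have hηsupp : Function.support η ⊆ Function.support ξ ∪ {p, q} := by
    intro y hy
    simp only [Function.mem_support, hηdef] at hy
    by_cases hyp : y = p
    · exact Or.inr (Or.inl hyp)
    by_cases hyq : y = q
    · exact Or.inr (Or.inr hyq)
    by_cases hyx : y = x₀
    · exfalso; apply hy; simp [hyp, hyq, hyx, Ne.symm hpne, Ne.symm hqne]
    left
    intro h0
    apply hy
    simp [hyp, hyq, hyx, h0]
  -- exponents agree
  have ep : θ₁ * p.1 + θ₂ * p.2 = θ₁ * x₀.1 + θ₂ * x₀.2 := by
    rw [hp1, hp2]; ring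
  have eq' : θ₁ * q.1 + θ₂ * q.2 = θ₁ * x₀.1 + θ₂ * x₀.2 := by
    rw [hq1, hq2]; ring
  set E : ℝ := Real.exp (θ₁ * x₀.1 + θ₂ * x₀.2) with hEdef
  have hE : 0 < E := Real.exp_pos _
  have hfp : f p = E • ![1, θ₀ * (x₀.1 + t * θ₂), θ₀ * (x₀.2 - t * θ₁)] := by
    rw [hf p, ep, hp1, hp2]
  have hfq : f q = E • ![1, θ₀ * (x₀.1 - t * θ₂), θ₀ * (x₀.2 + t * θ₁)] := by
    rw [hf q, eq', hq1, hq2]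
  have hfx : f x₀ = (1 / 2 : ℝ) • (f p + f q) := by
    rw [hf x₀, hfp, hfq]
    funext i
    fin_cases i <;>
      simp [Matrix.smul_cons, Matrix.smul_empty, smul_eq_mul] <;> ring
  -- the information matrix of η
  have hM : infoMatrix f η = infoMatrix f ξ
      + (ξ x₀ / 2) • Matrix.vecMulVec (f p) (f p)
      + (ξ x₀ / 2) • Matrix.vecMulVec (f q) (f q)
      - ξ x₀ • Matrix.vecMulVec (f x₀) (f x₀) :=
    sum_shift ξ hfin x₀ p q hpne hqne hpq (fun y => Matrix.vecMulVec (f y) (f y))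
  have hdiff : infoMatrix f η - infoMatrix f ξ
      = (ξ x₀ / 4) • Matrix.vecMulVec (f p - f q) (f p - f q) := by
    rw [hM, hfx]
    ext i j
    simp only [Matrix.sub_apply, Matrix.add_apply, Matrix.smul_apply, Matrix.vecMulVec_apply,
      Pi.add_apply, Pi.sub_apply, Pi.smul_apply, smul_eq_mul]
    ring
  have hpsd : (infoMatrix f η - infoMatrix f ξ).PosSemidef := by
    rw [hdiff, Matrix.posSemidef_iff_dotProduct_mulVec]
    constructor
    · ext i j
      simp only [Matrix.conjTranspose_apply, Matrix.smul_apply, Matrix.vecMulVec_apply,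
        smul_eq_mul, star_trivial]
      ring
    · intro v
      have hval : dotProduct (star v)
          ((((ξ x₀ / 4) • Matrix.vecMulVec (f p - f q) (f p - f q))) *ᵥ v)
          = (ξ x₀ / 4) * ((f p 0 - f q 0) * v 0 + (f p 1 - f q 1) * v 1
            + (f p 2 - f q 2) * v 2) ^ 2 := by
        simp only [star_trivial, dotProduct, Matrix.mulVec, Matrix.smul_apply,
          Matrix.vecMulVec_apply, Pi.sub_apply, smul_eq_mul, Fin.sum_univ_three]
        ring
      rw [hval]
      positivity
  -- f p 1 - f q 1 > 0
  have hfp1 : f p 1 = E * (θ₀ * (x₀.1 + t * θ₂)) := by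
    rw [hfp]; simp
  have hfq1 : f q 1 = E * (θ₀ * (x₀.1 - t * θ₂)) := by
    rw [hfq]; simp
  have hd1 : 0 < f p 1 - f q 1 := by
    rw [hfp1, hfq1]
    nlinarith [mul_pos (mul_pos hE hθ₀) htθ₂]
  apply hnot
  refine ⟨η, ⟨?_, ?_, ?_, ?_⟩, hpsd, ?_⟩
  · exact (hfin.union (Set.toFinite {p, q})).subset hηsupp
  · intro y
    rw [hηdef]
    refine add_nonneg (add_nonneg ?_ ?_) ?_
    · split
      · exact le_rfl
      · exact hpos y
    · split <;> linarith
    · split <;> linarith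
  · intro y hy
    rcases hηsupp hy with h | h
    · exact hsupp h
    · rcases h with h | h
      · exact h ▸ hpX
      · exact h ▸ hqX
  · have := sum_shift ξ hfin x₀ p q hpne hqne hpq (fun _ => (1 : ℝ))
    simp only [smul_eq_mul, mul_one] at this
    calc ∑ᶠ y, η y = ∑ᶠ y, ξ y + ξ x₀ / 2 + ξ x₀ / 2 - ξ x₀ := this
    _ = 1 := by rw [hsum]; ring
  · intro heq
    have h0 : infoMatrix f η - infoMatrix f ξ = 0 := by rw [heq, sub_self]
    rw [hdiff] at h0
    have h11 := Matrix.ext_iff.mpr h0 1 1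
    rw [Matrix.smul_apply, Matrix.vecMulVec_apply, Pi.sub_apply, smul_eq_mul,
      Matrix.zero_apply] at h11
    exact absurd h11
      (ne_of_gt (mul_pos (div_pos hw (by norm_num)) (mul_pos hd1 hd1)))
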